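/- Let b, s, r ≥ 1 be integers with gcd(b, s) = 1 and every prime dividing r dividing b. Then for any finite sequence of complex numbers (a_m), Σ*_{x mod b} |Σ_m a_m S(0, m; s) S(r x, m; b r)|² ≤ b r² s Σ*_{x mod bs} |Σ_{m ≡ 0 mod r} a_m e(x (m/r) / (b s))|². -/

import Mathlib

/-- `e(x) = exp(2πix)`. -/
noncomputable def eBase (x : ℝ) : ℂ := Complex.exp (2 * Real.pi * Complex.I * x)

/-- The Kloosterman sum `S(a,b;c) = Σ*_{h mod c} e((a h + b h̄)/c)`. -/
noncomputable def kloosterman (a b : ℤ) (c : ℕ) : ℂ :=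
  if h : c = 0 then 0 else
    haveI : NeZero c := ⟨h⟩
    ∑ u : (ZMod c)ˣ,
      eBase (((a * (((u : ZMod c)).val : ℤ) + b * ((((u⁻¹ : (ZMod c)ˣ) : ZMod c)).val : ℤ) : ℤ) : ℝ) / c)

open ZMod Finset

section infra
variable {N : ℕ} [NeZero N]

lemma eBase_int (n : ℤ) : eBase ((n : ℝ) / N) = stdAddChar (n : ZMod N) := by
  rw [stdAddChar_coe, eBase]
  push_cast
  ring_nf

lemma eBase_nat (n : ℕ) : eBase ((n : ℝ) / N) = stdAddChar (n : ZMod N) := by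
  simpa using eBase_int (N := N) (n : ℤ)

lemma conj_stdAddChar (z : ZMod N) :
    (starRingEnd ℂ) (stdAddChar z) = stdAddChar (-z) := by
  obtain ⟨n, rfl⟩ := ZMod.intCast_surjective z
  rw [stdAddChar_coe, ← Int.cast_neg, stdAddChar_coe, ← Complex.exp_conj]
  congr 1
  push_cast
  simp [Complex.conj_ofNat]

lemma sum_stdAddChar_mul (c : ZMod N) :
    ∑ x : ZMod N, stdAddChar (x * c) = if c = 0 then (N : ℂ) else 0 := by
  classical
  have h0 : ∀ x, stdAddChar (x * c) = (stdAddChar.mulShift c) x := by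
    intro x; simp [AddChar.mulShift_apply, mul_comm]
  simp_rw [h0]
  rw [AddChar.sum_eq_ite]
  have hprim := ZMod.isPrimitive_stdAddChar N
  split_ifs with h1 h2 h2
  · simp [ZMod.card]
  · exact (hprim h2 h1).elim
  · subst h2
    rw [AddChar.mulShift_zero] at h1
    exact (h1 rfl).elim
  · rfl
end infra

section helpers

/-- coprimality to `b` implies coprimality to `b*r` when every prime of `r` divides `b` -/
lemma coprime_mul_of_rad {b r k : ℕ} (hrad : ∀ p : ℕ, p.Prime → p ∣ r → p ∣ b)
    (h : k.Coprime b) : k.Coprime (b * r) := by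
  refine h.mul_right ?_
  by_contra hc
  obtain ⟨p, hp, hpk, hpr⟩ := Nat.Prime.not_coprime_iff_dvd.mp hc
  have hpb := hrad p hp hpr
  have hd : p ∣ Nat.gcd k b := Nat.dvd_gcd hpk hpb
  rw [h] at hd
  exact hp.one_lt.ne' (Nat.dvd_one.mp hd)

lemma totient_mul_rad (b : ℕ) (hb : b ≠ 0) :
    ∀ r : ℕ, r ≠ 0 → (∀ p : ℕ, p.Prime → p ∣ r → p ∣ b) →
      (b * r).totient = r * b.totient := by
  intro r
  induction r using Nat.strong_induction_on with
  | _ r ih =>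
    intro hr hrad
    rcases eq_or_ne r 1 with rfl | hr1
    · simp
    · have hpp : r.minFac.Prime := Nat.minFac_prime hr1
      have hpr : r.minFac ∣ r := Nat.minFac_dvd r
      set p := r.minFac with hp
      set r' := r / p with hr'def
      have hre : r = p * r' := (Nat.mul_div_cancel' hpr).symm
      have hr' : r' ≠ 0 := by
        rintro h0; rw [h0, mul_zero] at hre; exact hr hre
      have hr'lt : r' < r := Nat.div_lt_self (Nat.pos_of_ne_zero hr) hpp.one_lt
      have hpb : p ∣ b := hrad p hpp hpr
      have h1 : b * r = p * (b * r') := by rw [hre]; ring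
      have hrad' : ∀ q : ℕ, q.Prime → q ∣ r' → q ∣ b := fun q hq hqr' =>
        hrad q hq (hre ▸ hqr'.mul_left p)
      rw [h1, Nat.totient_mul_of_prime_of_dvd hpp (hpb.mul_right r'),
        ih r' hr'lt hr' hrad', hre]
      ring

end helpers

section psiscale
variable (b r : ℕ) [NeZero b] [NeZero r]

lemma psi_r_mul (n : ℤ) :
    stdAddChar ((r * n : ℤ) : ZMod (b * r)) = stdAddChar ((n : ℤ) : ZMod b) := by
  rw [stdAddChar_coe, stdAddChar_coe]
  congr 1
  have hb : (b : ℂ) ≠ 0 := Nat.cast_ne_zero.mpr (NeZero.ne b)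
  have hr : (r : ℂ) ≠ 0 := Nat.cast_ne_zero.mpr (NeZero.ne r)
  push_cast
  field_simp

lemma psi_b_mul (n : ℤ) :
    stdAddChar ((b * n : ℤ) : ZMod (b * r)) = stdAddChar ((n : ℤ) : ZMod r) := by
  rw [stdAddChar_coe, stdAddChar_coe]
  congr 1
  have hb : (b : ℂ) ≠ 0 := Nat.cast_ne_zero.mpr (NeZero.ne b)
  have hr : (r : ℂ) ≠ 0 := Nat.cast_ne_zero.mpr (NeZero.ne r)
  push_cast
  field_simp

/-- kernel lemma : multiplication by r kills the difference of two elements congruent mod b -/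
lemma r_mul_eq_of_cast_eq {z z' : ZMod (b * r)}
    (h : ((z.val : ℕ) : ZMod b) = ((z'.val : ℕ) : ZMod b)) :
    (r : ZMod (b * r)) * z = (r : ZMod (b * r)) * z' := by
  have h1 : z.val ≡ z'.val [MOD b] := (ZMod.natCast_eq_natCast_iff _ _ _).mp h
  have h2 : r * z.val ≡ r * z'.val [MOD r * b] := h1.mul_left' (c := r)
  have h3 : r * z.val ≡ r * z'.val [MOD b * r] := by rwa [Nat.mul_comm r b] at h2
  have h4 : ((r * z.val : ℕ) : ZMod (b * r)) = ((r * z'.val : ℕ) : ZMod (b * r)) :=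
    (ZMod.natCast_eq_natCast_iff _ _ _).mpr h3
  push_cast at h4
  rwa [ZMod.natCast_val, ZMod.natCast_val, ZMod.cast_id, ZMod.cast_id] at h4

end psiscale

lemma kloosterman_eq (a m : ℤ) (c : ℕ) [NeZero c] :
    kloosterman a m c =
      ∑ u : (ZMod c)ˣ, stdAddChar ((a : ZMod c) * (u : ZMod c) + (m : ZMod c) * ((u⁻¹ : (ZMod c)ˣ) : ZMod c)) := by
  rw [kloosterman, dif_neg (NeZero.ne c)]
  refine Finset.sum_congr rfl fun u _ => ?_
  rw [eBase_int]
  congr 1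
  push_cast
  simp [ZMod.natCast_val, ZMod.cast_id]

section lemA
variable (b r : ℕ) [NeZero b] [NeZero r]

instance : NeZero (b * r) := ⟨Nat.mul_ne_zero (NeZero.ne b) (NeZero.ne r)⟩

/-- the value of the lift -/
def nv (v : (ZMod b)ˣ) (j : ZMod r) : ℕ := (v : ZMod b).val + b * j.val

lemma nv_coprime (hrad : ∀ p : ℕ, p.Prime → p ∣ r → p ∣ b) (v : (ZMod b)ˣ) (j : ZMod r) :
    (nv b r v j).Coprime (b * r) :=
  coprime_mul_of_rad hrad
    ((Nat.coprime_add_mul_left_left _ _ _).mpr (ZMod.val_coe_unit_coprime v))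

/-- the lifted unit -/
noncomputable def EE (hrad : ∀ p : ℕ, p.Prime → p ∣ r → p ∣ b) (v : (ZMod b)ˣ) (j : ZMod r) :
    (ZMod (b * r))ˣ :=
  ZMod.unitOfCoprime _ (nv_coprime b r hrad v j)

lemma EE_coe (hrad : ∀ p : ℕ, p.Prime → p ∣ r → p ∣ b) (v : (ZMod b)ˣ) (j : ZMod r) :
    (EE b r hrad v j : ZMod (b * r)) = ((nv b r v j : ℕ) : ZMod (b * r)) := rfl

lemma nv_lt (v : (ZMod b)ˣ) (j : ZMod r) : nv b r v j < b * r := by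
  have h1 : (v : ZMod b).val < b := ZMod.val_lt _
  have h2 : j.val < r := ZMod.val_lt _
  have h3 : (v : ZMod b).val + b * j.val < b + b * j.val := by omega
  calc nv b r v j < b + b * j.val := h3
  _ = b * (j.val + 1) := by ring
  _ ≤ b * r := Nat.mul_le_mul_left _ (by omega)

lemma EE_injective (hrad : ∀ p : ℕ, p.Prime → p ∣ r → p ∣ b) :
    Function.Injective (fun p : (ZMod b)ˣ × ZMod r => EE b r hrad p.1 p.2) := by
  rintro ⟨v, j⟩ ⟨v', j'⟩ h
  simp only at h
  have hcoe : (EE b r hrad v j : ZMod (b * r)) = (EE b r hrad v' j' : ZMod (b * r)) :=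
    congrArg Units.val h
  rw [EE_coe, EE_coe] at hcoe
  have hval : nv b r v j = nv b r v' j' := by
    have := congrArg ZMod.val hcoe
    rwa [ZMod.val_cast_of_lt (nv_lt b r v j), ZMod.val_cast_of_lt (nv_lt b r v' j')] at this
  have hb0 : 0 < b := Nat.pos_of_ne_zero (NeZero.ne b)
  have hv1 : (v : ZMod b).val < b := ZMod.val_lt _
  have hv2 : (v' : ZMod b).val < b := ZMod.val_lt _
  unfold nv at hval
  have h1 : (v : ZMod b).val = (v' : ZMod b).val := by
    have := congrArg (· % b) hval
    simpa [Nat.add_mul_mod_self_left, Nat.mod_eq_of_lt hv1, Nat.mod_eq_of_lt hv2] using this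
  rw [h1] at hval
  have h2 : j.val = j'.val := Nat.eq_of_mul_eq_mul_left hb0 (Nat.add_left_cancel hval)
  refine Prod.ext ?_ ?_
  · exact Units.ext (ZMod.val_injective _ h1)
  · exact ZMod.val_injective _ h2

lemma EE_bijective (hrad : ∀ p : ℕ, p.Prime → p ∣ r → p ∣ b) :
    Function.Bijective (fun p : (ZMod b)ˣ × ZMod r => EE b r hrad p.1 p.2) := by
  rw [Fintype.bijective_iff_injective_and_card]
  refine ⟨EE_injective b r hrad, ?_⟩
  rw [Fintype.card_prod, ZMod.card_units_eq_totient, ZMod.card_units_eq_totient, ZMod.card,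
    totient_mul_rad b (NeZero.ne b) r (NeZero.ne r) hrad]
  ring
end lemA

section lemA2
variable (b r : ℕ) [NeZero b] [NeZero r]

lemma cast_EE (hrad : ∀ p : ℕ, p.Prime → p ∣ r → p ∣ b) (v : (ZMod b)ˣ) (j : ZMod r) :
    ZMod.castHom (⟨r, rfl⟩ : b ∣ b * r) (ZMod b) (EE b r hrad v j : ZMod (b * r))
      = (v : ZMod b) := by
  rw [EE_coe, map_natCast]
  unfold nv
  push_cast
  simp [ZMod.natCast_val, ZMod.cast_id]

lemma cast_EE_inv (hrad : ∀ p : ℕ, p.Prime → p ∣ r → p ∣ b) (v : (ZMod b)ˣ) (j : ZMod r) :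
    ZMod.castHom (⟨r, rfl⟩ : b ∣ b * r) (ZMod b) (((EE b r hrad v j)⁻¹ : (ZMod (b * r))ˣ) : ZMod (b * r))
      = ((v⁻¹ : (ZMod b)ˣ) : ZMod b) := by
  set φ := (ZMod.castHom (⟨r, rfl⟩ : b ∣ b * r) (ZMod b)).toMonoidHom with hφ
  have h1 : Units.map φ (EE b r hrad v j) = v :=
    Units.ext (by rw [Units.coe_map]; exact cast_EE b r hrad v j)
  have h2 : Units.map φ (EE b r hrad v j)⁻¹ = v⁻¹ := by rw [map_inv, h1]
  calc ZMod.castHom (⟨r, rfl⟩ : b ∣ b * r) (ZMod b) (((EE b r hrad v j)⁻¹ : (ZMod (b * r))ˣ) : ZMod (b * r))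
      = ((Units.map φ (EE b r hrad v j)⁻¹ : (ZMod b)ˣ) : ZMod b) := by
        rw [Units.coe_map]; rfl
  _ = ((v⁻¹ : (ZMod b)ˣ) : ZMod b) := by rw [h2]

lemma r_mul_eq_of_castHom_eq {z z' : ZMod (b * r)}
    (h : ZMod.castHom (⟨r, rfl⟩ : b ∣ b * r) (ZMod b) z
        = ZMod.castHom (⟨r, rfl⟩ : b ∣ b * r) (ZMod b) z') :
    (r : ZMod (b * r)) * z = (r : ZMod (b * r)) * z' := by
  apply r_mul_eq_of_cast_eq
  rwa [ZMod.natCast_val, ZMod.natCast_val, ← ZMod.castHom_apply (h := (⟨r, rfl⟩ : b ∣ b * r)),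
    ← ZMod.castHom_apply (h := (⟨r, rfl⟩ : b ∣ b * r))]

end lemA2

lemma kloosterman_factor (b r : ℕ) [NeZero b] [NeZero r]
    (hrad : ∀ p : ℕ, p.Prime → p ∣ r → p ∣ b) (x m : ℤ) :
    kloosterman (r * x) m (b * r) =
      if (r : ℤ) ∣ m then (r : ℂ) * kloosterman x (m / r) b else 0 := by
  rw [kloosterman_eq]
  have hinv : ∑ u : (ZMod (b * r))ˣ,
        stdAddChar (((r * x : ℤ) : ZMod (b * r)) * (u : ZMod (b * r))
          + (m : ZMod (b * r)) * ((u⁻¹ : (ZMod (b * r))ˣ) : ZMod (b * r)))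
      = ∑ u : (ZMod (b * r))ˣ,
        stdAddChar (((r * x : ℤ) : ZMod (b * r)) * ((u⁻¹ : (ZMod (b * r))ˣ) : ZMod (b * r))
          + (m : ZMod (b * r)) * (u : ZMod (b * r))) :=
    Fintype.sum_equiv (Equiv.inv _) _ _ (fun u => by simp)
  rw [hinv]
  have hbij := Fintype.sum_bijective _ (EE_bijective b r hrad)
    (fun p : (ZMod b)ˣ × ZMod r =>
      stdAddChar (((r * x : ℤ) : ZMod (b * r)) * (((EE b r hrad p.1 p.2)⁻¹ : (ZMod (b * r))ˣ) : ZMod (b * r))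
        + (m : ZMod (b * r)) * ((EE b r hrad p.1 p.2 : (ZMod (b * r))ˣ) : ZMod (b * r))))
    (fun u => stdAddChar (((r * x : ℤ) : ZMod (b * r)) * ((u⁻¹ : (ZMod (b * r))ˣ) : ZMod (b * r))
        + (m : ZMod (b * r)) * (u : ZMod (b * r))))
    (fun p => rfl)
  rw [← hbij, Fintype.sum_prod_type]
  -- rewrite each term
  have hterm : ∀ (v : (ZMod b)ˣ) (j : ZMod r),
      stdAddChar (((r * x : ℤ) : ZMod (b * r)) * (((EE b r hrad v j)⁻¹ : (ZMod (b * r))ˣ) : ZMod (b * r))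
        + (m : ZMod (b * r)) * ((EE b r hrad v j : (ZMod (b * r))ˣ) : ZMod (b * r)))
      = stdAddChar ((x : ZMod b) * ((v⁻¹ : (ZMod b)ˣ) : ZMod b))
        * stdAddChar ((m * ((v : ZMod b).val : ℤ) : ℤ) : ZMod (b * r))
        * stdAddChar ((m : ZMod r) * j) := by
    intro v j
    set w : ℕ := ((v⁻¹ : (ZMod b)ˣ) : ZMod b).val with hw
    -- A-part
    have hA : ((r * x : ℤ) : ZMod (b * r)) * (((EE b r hrad v j)⁻¹ : (ZMod (b * r))ˣ) : ZMod (b * r))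
        = ((r * (x * w) : ℤ) : ZMod (b * r)) := by
      have hker : (r : ZMod (b * r)) * (((EE b r hrad v j)⁻¹ : (ZMod (b * r))ˣ) : ZMod (b * r))
          = (r : ZMod (b * r)) * ((w : ℕ) : ZMod (b * r)) := by
        apply r_mul_eq_of_castHom_eq
        rw [cast_EE_inv b r hrad v j, map_natCast, hw, ZMod.natCast_val, ZMod.cast_id]
      push_cast
      calc (r : ZMod (b * r)) * (x : ZMod (b * r)) * (((EE b r hrad v j)⁻¹ : (ZMod (b * r))ˣ) : ZMod (b * r))
          = (x : ZMod (b * r)) * ((r : ZMod (b * r)) * (((EE b r hrad v j)⁻¹ : (ZMod (b * r))ˣ) : ZMod (b * r))) := by ring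
      _ = (x : ZMod (b * r)) * ((r : ZMod (b * r)) * ((w : ℕ) : ZMod (b * r))) := by rw [hker]
      _ = (r : ZMod (b * r)) * ((x : ZMod (b * r)) * ((w : ℕ) : ZMod (b * r))) := by ring
    -- B-part
    have hB : (m : ZMod (b * r)) * ((EE b r hrad v j : (ZMod (b * r))ˣ) : ZMod (b * r))
        = ((m * ((v : ZMod b).val : ℤ) : ℤ) : ZMod (b * r))
          + ((b * (m * (j.val : ℤ)) : ℤ) : ZMod (b * r)) := by
      rw [EE_coe]
      unfold nv
      push_cast
      ring
    rw [hA, hB, ← add_assoc, AddChar.map_add_eq_mul, AddChar.map_add_eq_mul]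
    congr 1
    · congr 1
      · rw [psi_r_mul]
        congr 1
        push_cast
        rw [hw, ZMod.natCast_val, ZMod.cast_id]
    · rw [psi_b_mul]
      congr 1
      push_cast
      rw [ZMod.natCast_val, ZMod.cast_id]
  simp_rw [hterm]
  -- sum over j
  have hsumj : ∑ j : ZMod r, stdAddChar ((m : ZMod r) * j)
      = if (m : ZMod r) = 0 then (r : ℂ) else 0 := by
    rw [← sum_stdAddChar_mul ((m : ZMod r))]
    exact Fintype.sum_congr _ _ (fun j => by rw [mul_comm])
  simp_rw [← Finset.mul_sum, hsumj]
  by_cases hdvd : (r : ℤ) ∣ m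
  · have hm0 : (m : ZMod r) = 0 := by
      rw [ZMod.intCast_zmod_eq_zero_iff_dvd]
      exact_mod_cast hdvd
    rw [if_pos hm0, if_pos hdvd]
    obtain ⟨m', rfl⟩ := hdvd
    have hrz : (r : ℤ) ≠ 0 := by exact_mod_cast NeZero.ne r
    rw [Int.mul_ediv_cancel_left _ hrz, kloosterman_eq]
    have hinv2 : ∑ u : (ZMod b)ˣ,
          stdAddChar ((x : ZMod b) * (u : ZMod b)
            + (m' : ZMod b) * ((u⁻¹ : (ZMod b)ˣ) : ZMod b))
        = ∑ u : (ZMod b)ˣ,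
          stdAddChar ((x : ZMod b) * ((u⁻¹ : (ZMod b)ˣ) : ZMod b)
            + (m' : ZMod b) * (u : ZMod b)) :=
      Fintype.sum_equiv (Equiv.inv _) _ _ (fun u => by simp)
    rw [hinv2, Finset.mul_sum]
    refine Finset.sum_congr rfl fun v _ => ?_
    have hBv : ((r * m' * (((v : ZMod b).val : ℤ)) : ℤ) : ZMod (b * r))
        = ((r * (m' * ((v : ZMod b).val : ℤ)) : ℤ) : ZMod (b * r)) := by
      congr 1
      ring
    rw [hBv, psi_r_mul]
    have hcast : ((m' * ((v : ZMod b).val : ℤ) : ℤ) : ZMod b)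
        = (m' : ZMod b) * (v : ZMod b) := by
      push_cast
      rw [ZMod.natCast_val, ZMod.cast_id]
    rw [hcast, ← AddChar.map_add_eq_mul]
    ring
  · have hm0 : (m : ZMod r) ≠ 0 := by
      rw [Ne, ZMod.intCast_zmod_eq_zero_iff_dvd]
      intro hc
      exact hdvd (by exact_mod_cast hc)
    rw [if_neg hdvd]
    simp [if_neg hm0]

section parseval
variable (n : ℕ) [NeZero n]

lemma sum_units_eq (f : ZMod n → ℂ) :
    ∑ x ∈ (Finset.range n).filter (fun x => Nat.Coprime x n), f ((x : ℕ) : ZMod n)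
      = ∑ u : (ZMod n)ˣ, f ((u : ZMod n)) := by
  refine Finset.sum_nbij' (fun x => if h : x.Coprime n then ZMod.unitOfCoprime x h else 1)
    (fun u => (u : ZMod n).val) ?_ ?_ ?_ ?_ ?_
  · intro x hx
    exact Finset.mem_univ _
  · intro u _
    simp only [Finset.mem_filter, Finset.mem_range]
    exact ⟨ZMod.val_lt _, ZMod.val_coe_unit_coprime u⟩
  · intro x hx
    simp only [Finset.mem_filter, Finset.mem_range] at hx
    simp only [dif_pos hx.2, ZMod.coe_unitOfCoprime]
    rw [ZMod.val_cast_of_lt hx.1]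
  · intro u _
    refine Units.ext ?_
    simp only [dif_pos (ZMod.val_coe_unit_coprime u), ZMod.coe_unitOfCoprime]
    rw [ZMod.natCast_val, ZMod.cast_id]
  · intro x hx
    simp only [Finset.mem_filter, Finset.mem_range] at hx
    simp only [dif_pos hx.2, ZMod.coe_unitOfCoprime]

lemma sum_units_eq_real (f : ZMod n → ℝ) :
    ∑ x ∈ (Finset.range n).filter (fun x => Nat.Coprime x n), f ((x : ℕ) : ZMod n)
      = ∑ u : (ZMod n)ˣ, f ((u : ZMod n)) := by
  have := sum_units_eq n (fun z => ((f z : ℝ) : ℂ))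
  exact_mod_cast this

lemma sum_range_eq (f : ZMod n → ℝ) :
    ∑ x ∈ Finset.range n, f ((x : ℕ) : ZMod n) = ∑ x : ZMod n, f x := by
  refine Finset.sum_nbij' (fun x => ((x : ℕ) : ZMod n)) (fun z => z.val) ?_ ?_ ?_ ?_ ?_
  · intro x _; exact Finset.mem_univ _
  · intro z _; exact Finset.mem_range.mpr (ZMod.val_lt _)
  · intro x hx; exact ZMod.val_cast_of_lt (Finset.mem_range.mp hx)
  · intro z _; rw [ZMod.natCast_val, ZMod.cast_id]
  · intro x _; rfl

lemma parseval (H : (ZMod n)ˣ → ℂ) :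
    ∑ x : ZMod n, ‖∑ v : (ZMod n)ˣ, stdAddChar (x * (v : ZMod n)) * H v‖ ^ 2
      = (n : ℝ) * ∑ v : (ZMod n)ˣ, ‖H v‖ ^ 2 := by
  have key : ∑ x : ZMod n,
      (∑ v : (ZMod n)ˣ, stdAddChar (x * (v : ZMod n)) * H v) *
        (starRingEnd ℂ) (∑ v : (ZMod n)ˣ, stdAddChar (x * (v : ZMod n)) * H v)
      = (n : ℂ) * ∑ v : (ZMod n)ˣ, H v * (starRingEnd ℂ) (H v) := by
    have expand : ∀ x : ZMod n,
        (∑ v : (ZMod n)ˣ, stdAddChar (x * (v : ZMod n)) * H v) *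
          (starRingEnd ℂ) (∑ v : (ZMod n)ˣ, stdAddChar (x * (v : ZMod n)) * H v)
        = ∑ v : (ZMod n)ˣ, ∑ v' : (ZMod n)ˣ,
            (H v * (starRingEnd ℂ) (H v')) * stdAddChar (x * ((v : ZMod n) - (v' : ZMod n))) := by
      intro x
      rw [map_sum, Finset.sum_mul_sum]
      refine Finset.sum_congr rfl fun v _ => Finset.sum_congr rfl fun v' _ => ?_
      rw [map_mul (starRingEnd ℂ), conj_stdAddChar]
      have hcomb : stdAddChar (x * (v : ZMod n)) * stdAddChar (-(x * (v' : ZMod n)))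
          = stdAddChar (x * ((v : ZMod n) - (v' : ZMod n))) := by
        rw [← AddChar.map_add_eq_mul]
        congr 1
        ring
      calc stdAddChar (x * (v : ZMod n)) * H v *
            (stdAddChar (-(x * (v' : ZMod n))) * (starRingEnd ℂ) (H v'))
          = (H v * (starRingEnd ℂ) (H v')) *
            (stdAddChar (x * (v : ZMod n)) * stdAddChar (-(x * (v' : ZMod n)))) := by ring
      _ = (H v * (starRingEnd ℂ) (H v')) * stdAddChar (x * ((v : ZMod n) - (v' : ZMod n))) := by
        rw [hcomb]
    simp_rw [expand]
    rw [Finset.sum_comm]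
    have swap2 : ∀ v : (ZMod n)ˣ,
        ∑ x : ZMod n, ∑ v' : (ZMod n)ˣ,
          (H v * (starRingEnd ℂ) (H v')) * stdAddChar (x * ((v : ZMod n) - (v' : ZMod n)))
        = ∑ v' : (ZMod n)ˣ, (H v * (starRingEnd ℂ) (H v')) *
            (if ((v : ZMod n) - (v' : ZMod n)) = 0 then (n : ℂ) else 0) := by
      intro v
      rw [Finset.sum_comm]
      refine Finset.sum_congr rfl fun v' _ => ?_
      rw [← Finset.mul_sum, sum_stdAddChar_mul]
    simp_rw [swap2]
    have collapse : ∀ v : (ZMod n)ˣ,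
        ∑ v' : (ZMod n)ˣ, (H v * (starRingEnd ℂ) (H v')) *
            (if ((v : ZMod n) - (v' : ZMod n)) = 0 then (n : ℂ) else 0)
        = (n : ℂ) * (H v * (starRingEnd ℂ) (H v)) := by
      intro v
      rw [Finset.sum_eq_single v]
      · rw [if_pos (by simp), mul_comm]
      · intro v' _ hne
        rw [if_neg, mul_zero]
        intro hz
        exact hne (Units.ext (sub_eq_zero.mp hz).symm)
      · intro habs
        exact absurd (Finset.mem_univ v) habs
    simp_rw [collapse, ← Finset.mul_sum]
  have normsq_c : ∀ z : ℂ, ((‖z‖ ^ 2 : ℝ) : ℂ) = z * (starRingEnd ℂ) z := by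
    intro z
    rw [Complex.mul_conj]
    norm_cast
    rw [Complex.normSq_eq_norm_sq]
  apply Complex.ofReal_injective
  push_cast
  simp_rw [← Complex.ofReal_pow]
  calc ∑ x : ZMod n, ((‖∑ v : (ZMod n)ˣ, stdAddChar (x * (v : ZMod n)) * H v‖ ^ 2 : ℝ) : ℂ)
      = ∑ x : ZMod n,
        (∑ v : (ZMod n)ˣ, stdAddChar (x * (v : ZMod n)) * H v) *
          (starRingEnd ℂ) (∑ v : (ZMod n)ˣ, stdAddChar (x * (v : ZMod n)) * H v) := by
        exact Finset.sum_congr rfl fun x _ => normsq_c _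
  _ = (n : ℂ) * ∑ v : (ZMod n)ˣ, H v * (starRingEnd ℂ) (H v) := key
  _ = (n : ℂ) * ∑ v : (ZMod n)ˣ, ((‖H v‖ ^ 2 : ℝ) : ℂ) := by
        rw [Finset.sum_congr rfl fun v _ => (normsq_c (H v)).symm]
end parseval

lemma kloosterman_zero_left (m : ℤ) (s : ℕ) [NeZero s] :
    kloosterman 0 m s = ∑ w : (ZMod s)ˣ, stdAddChar ((m : ZMod s) * (w : ZMod s)) := by
  rw [kloosterman_eq]
  exact Fintype.sum_equiv (Equiv.inv _) _ _ (fun u => by simp)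

section crt
variable (b s r : ℕ) [NeZero b] [NeZero s]

/-- the CRT twisted value -/
def tv (v : (ZMod b)ˣ) (w : (ZMod s)ˣ) : ℕ :=
  s * (v : ZMod b).val + b * (r * (w : ZMod s).val)

lemma tv_coprime (hbs : b.Coprime s) (hrs : r.Coprime s) (v : (ZMod b)ˣ) (w : (ZMod s)ˣ) :
    (tv b s r v w).Coprime (b * s) := by
  have h1 : (tv b s r v w).Coprime b := by
    unfold tv
    rw [Nat.coprime_add_mul_left_left]
    exact Nat.Coprime.mul (hbs.symm.coprime_dvd_left dvd_rfl) (ZMod.val_coe_unit_coprime v)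
  have h2 : (tv b s r v w).Coprime s := by
    unfold tv
    rw [add_comm, Nat.coprime_add_mul_left_left]
    exact Nat.Coprime.mul hbs (Nat.Coprime.mul hrs (ZMod.val_coe_unit_coprime w))
  exact h1.mul_right h2

noncomputable def TT (hbs : b.Coprime s) (hrs : r.Coprime s) (v : (ZMod b)ˣ) (w : (ZMod s)ˣ) :
    (ZMod (b * s))ˣ :=
  ZMod.unitOfCoprime _ (tv_coprime b s r hbs hrs v w)

lemma TT_coe (hbs : b.Coprime s) (hrs : r.Coprime s) (v : (ZMod b)ˣ) (w : (ZMod s)ˣ) :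
    (TT b s r hbs hrs v w : ZMod (b * s)) = ((tv b s r v w : ℕ) : ZMod (b * s)) := rfl

lemma TT_injective (hbs : b.Coprime s) (hrs : r.Coprime s) :
    Function.Injective (fun p : (ZMod b)ˣ × (ZMod s)ˣ => TT b s r hbs hrs p.1 p.2) := by
  rintro ⟨v, w⟩ ⟨v', w'⟩ h
  have hcoe : ((tv b s r v w : ℕ) : ZMod (b * s)) = ((tv b s r v' w' : ℕ) : ZMod (b * s)) :=
    congrArg Units.val h
  have hb : ((tv b s r v w : ℕ) : ZMod b) = ((tv b s r v' w' : ℕ) : ZMod b) := by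
    have := congrArg (ZMod.castHom (⟨s, rfl⟩ : b ∣ b * s) (ZMod b)) hcoe
    rwa [map_natCast, map_natCast] at this
  have hs : ((tv b s r v w : ℕ) : ZMod s) = ((tv b s r v' w' : ℕ) : ZMod s) := by
    have := congrArg (ZMod.castHom (⟨b, mul_comm b s⟩ : s ∣ b * s) (ZMod s)) hcoe
    rwa [map_natCast, map_natCast] at this
  have hvb : ∀ (v : (ZMod b)ˣ) (w : (ZMod s)ˣ),
      ((tv b s r v w : ℕ) : ZMod b) = (s : ZMod b) * (v : ZMod b) := by
    intro v w
    unfold tv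
    push_cast
    simp [ZMod.natCast_val, ZMod.cast_id]
  have hws : ∀ (v : (ZMod b)ˣ) (w : (ZMod s)ˣ),
      ((tv b s r v w : ℕ) : ZMod s) = ((b : ZMod s) * (r : ZMod s)) * (w : ZMod s) := by
    intro v w
    unfold tv
    push_cast
    simp only [ZMod.natCast_self, mul_zero, zero_mul, zero_add]
    rw [ZMod.natCast_val, ZMod.cast_id]
    ring
  rw [hvb, hvb] at hb
  rw [hws, hws] at hs
  have husb : IsUnit (s : ZMod b) := (ZMod.isUnit_iff_coprime s b).mpr hbs.symm
  have hubr : IsUnit ((b : ZMod s) * (r : ZMod s)) := by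
    refine IsUnit.mul ?_ ?_
    · exact (ZMod.isUnit_iff_coprime b s).mpr hbs
    · exact (ZMod.isUnit_iff_coprime r s).mpr hrs
  have h1 : (v : ZMod b) = (v' : ZMod b) := husb.mul_left_cancel hb
  have h2 : (w : ZMod s) = (w' : ZMod s) := hubr.mul_left_cancel hs
  exact Prod.ext (Units.ext h1) (Units.ext h2)

lemma TT_bijective (hbs : b.Coprime s) (hrs : r.Coprime s) :
    Function.Bijective (fun p : (ZMod b)ˣ × (ZMod s)ˣ => TT b s r hbs hrs p.1 p.2) := by
  rw [Fintype.bijective_iff_injective_and_card]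
  refine ⟨TT_injective b s r hbs hrs, ?_⟩
  rw [Fintype.card_prod, ZMod.card_units_eq_totient, ZMod.card_units_eq_totient,
    ZMod.card_units_eq_totient, Nat.totient_mul hbs]

/-- the key character identity on the CRT element -/
lemma TT_psi (hbs : b.Coprime s) (hrs : r.Coprime s) (v : (ZMod b)ˣ) (w : (ZMod s)ˣ) (m' : ℕ) :
    stdAddChar ((TT b s r hbs hrs v w : ZMod (b * s)) * ((m' : ℕ) : ZMod (b * s)))
      = stdAddChar (((m' : ℕ) : ZMod b) * (v : ZMod b))
        * stdAddChar (((r * m' : ℕ) : ZMod s) * (w : ZMod s)) := by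
  rw [TT_coe]
  have harg : ((tv b s r v w : ℕ) : ZMod (b * s)) * ((m' : ℕ) : ZMod (b * s))
      = ((s * (m' * (v : ZMod b).val) : ℤ) : ZMod (b * s))
        + ((b * (r * m' * (w : ZMod s).val) : ℤ) : ZMod (b * s)) := by
    unfold tv
    push_cast
    ring
  rw [harg, AddChar.map_add_eq_mul, psi_r_mul b s, psi_b_mul b s]
  congr 1
  · congr 1
    push_cast
    rw [ZMod.natCast_val, ZMod.cast_id]
  · congr 1
    push_cast
    rw [ZMod.natCast_val, ZMod.cast_id]

end crt

/-- Cauchy-Schwarz step -/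
lemma cs_step (s : ℕ) [NeZero s] (f : (ZMod s)ˣ → ℂ) :
    ‖∑ w : (ZMod s)ˣ, f w‖ ^ 2 ≤ (s : ℝ) * ∑ w : (ZMod s)ˣ, ‖f w‖ ^ 2 := by
  have h1 : ‖∑ w : (ZMod s)ˣ, f w‖ ≤ ∑ w : (ZMod s)ˣ, ‖f w‖ := norm_sum_le _ _
  have h2 : ‖∑ w : (ZMod s)ˣ, f w‖ ^ 2 ≤ (∑ w : (ZMod s)ˣ, ‖f w‖) ^ 2 := by
    apply pow_le_pow_left₀ (norm_nonneg _) h1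
  have h3 : (∑ w : (ZMod s)ˣ, ‖f w‖) ^ 2
      ≤ ((Finset.univ (α := (ZMod s)ˣ)).card : ℝ) * ∑ w : (ZMod s)ˣ, ‖f w‖ ^ 2 := by
    exact_mod_cast sq_sum_le_card_mul_sum_sq (s := (Finset.univ : Finset (ZMod s)ˣ)) (f := fun w => ‖f w‖)
  have h4 : (Finset.univ.card (α := (ZMod s)ˣ) : ℝ) ≤ (s : ℝ) := by
    rw [Finset.card_univ, ZMod.card_units_eq_totient]
    exact_mod_cast Nat.totient_le s
  calc ‖∑ w : (ZMod s)ˣ, f w‖ ^ 2 ≤ (∑ w : (ZMod s)ˣ, ‖f w‖) ^ 2 := h2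
  _ ≤ ((Finset.univ (α := (ZMod s)ˣ)).card : ℝ) * ∑ w : (ZMod s)ˣ, ‖f w‖ ^ 2 := h3
  _ ≤ (s : ℝ) * ∑ w : (ZMod s)ˣ, ‖f w‖ ^ 2 := by
      apply mul_le_mul_of_nonneg_right h4
      positivity

theorem stmt_10 (b s r M : ℕ) (hb : 1 ≤ b) (hs : 1 ≤ s) (hr : 1 ≤ r)
    (hbs : Nat.Coprime b s) (hrad : ∀ p : ℕ, p.Prime → p ∣ r → p ∣ b) (a : ℕ → ℂ) :
    ∑ x ∈ (Finset.range b).filter (fun x => Nat.Coprime x b),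
        ‖∑ m ∈ Finset.Icc 1 M, a m * kloosterman 0 m s * kloosterman (r * x) m (b * r)‖ ^ 2
      ≤ (b : ℝ) * r ^ 2 * s *
        ∑ x ∈ (Finset.range (b * s)).filter (fun x => Nat.Coprime x (b * s)),
          ‖∑ m ∈ (Finset.Icc 1 M).filter (fun m => r ∣ m),
              a m * eBase (((x * (m / r) : ℕ) : ℝ) / ((b * s : ℕ) : ℝ))‖ ^ 2 := by
  haveI : NeZero b := ⟨by omega⟩
  haveI : NeZero s := ⟨by omega⟩
  haveI : NeZero r := ⟨by omega⟩
  have hrs : r.Coprime s := by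
    by_contra hc
    obtain ⟨p, hp, hpr, hps⟩ := Nat.Prime.not_coprime_iff_dvd.mp hc
    have hpb := hrad p hp hpr
    have hd : p ∣ Nat.gcd b s := Nat.dvd_gcd hpb hps
    rw [hbs] at hd
    exact hp.one_lt.ne' (Nat.dvd_one.mp hd)
  set F := (Finset.Icc 1 M).filter (fun m => r ∣ m) with hF
  set H : (ZMod b)ˣ → ℂ := fun v => ∑ m ∈ F, a m * kloosterman 0 m s *
      stdAddChar (((m / r : ℕ) : ZMod b) * ((v⁻¹ : (ZMod b)ˣ) : ZMod b)) with hH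
  set T : (ZMod b)ˣ → (ZMod s)ˣ → ℂ := fun v w => ∑ m ∈ F,
      a m * (stdAddChar (((m : ℕ) : ZMod s) * (w : ZMod s))
        * stdAddChar (((m / r : ℕ) : ZMod b) * (v : ZMod b))) with hT
  -- Step 1 : rewrite the inner sum
  have hinner : ∀ x : ℕ,
      ∑ m ∈ Finset.Icc 1 M, a m * kloosterman 0 m s * kloosterman (r * x) m (b * r)
        = (r : ℂ) * ∑ v : (ZMod b)ˣ,
            stdAddChar (((x : ℕ) : ZMod b) * (v : ZMod b)) * H v := by
    intro x
    have h1 : ∑ m ∈ Finset.Icc 1 M, a m * kloosterman 0 m s * kloosterman (r * x) m (b * r)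
        = ∑ m ∈ F, (r : ℂ) * (a m * kloosterman 0 m s * kloosterman x ((m / r : ℕ)) b) := by
      rw [hF, Finset.sum_filter]
      refine Finset.sum_congr rfl fun m _ => ?_
      rw [kloosterman_factor b r hrad x m]
      by_cases h : r ∣ m
      · rw [if_pos (Int.natCast_dvd_natCast.mpr h), if_pos h, ← Int.natCast_ediv]
        ring
      · rw [if_neg (fun hc => h (Int.natCast_dvd_natCast.mp hc)), if_neg h]
        ring
    rw [h1, ← Finset.mul_sum]
    congr 1
    have h2 : ∀ m : ℕ, kloosterman ((x : ℕ) : ℤ) ((m / r : ℕ) : ℤ) b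
        = ∑ v : (ZMod b)ˣ, stdAddChar (((x : ℕ) : ZMod b) * (v : ZMod b))
            * stdAddChar (((m / r : ℕ) : ZMod b) * ((v⁻¹ : (ZMod b)ˣ) : ZMod b)) := by
      intro m
      rw [kloosterman_eq]
      refine Finset.sum_congr rfl fun v _ => ?_
      rw [AddChar.map_add_eq_mul]
      norm_cast
    simp_rw [h2, Finset.mul_sum]
    rw [Finset.sum_comm, hH]
    refine Finset.sum_congr rfl fun v _ => ?_
    rw [Finset.mul_sum]
    refine Finset.sum_congr rfl fun m _ => ?_
    ring
  -- Step 2 : LHS equality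
  have hLHS : ∑ x ∈ (Finset.range b).filter (fun x => Nat.Coprime x b),
        ‖∑ m ∈ Finset.Icc 1 M, a m * kloosterman 0 m s * kloosterman (r * x) m (b * r)‖ ^ 2
      = (r : ℝ) ^ 2 * ∑ x ∈ (Finset.range b).filter (fun x => Nat.Coprime x b),
          ‖∑ v : (ZMod b)ˣ, stdAddChar (((x : ℕ) : ZMod b) * (v : ZMod b)) * H v‖ ^ 2 := by
    rw [Finset.mul_sum]
    refine Finset.sum_congr rfl fun x _ => ?_
    rw [hinner x, norm_mul, mul_pow, Complex.norm_natCast]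
  rw [hLHS]
  -- Step 3 : Parseval bound
  have hstep1 : ∑ x ∈ (Finset.range b).filter (fun x => Nat.Coprime x b),
        ‖∑ v : (ZMod b)ˣ, stdAddChar (((x : ℕ) : ZMod b) * (v : ZMod b)) * H v‖ ^ 2
      ≤ (b : ℝ) * ∑ v : (ZMod b)ˣ, ‖H v‖ ^ 2 := by
    calc ∑ x ∈ (Finset.range b).filter (fun x => Nat.Coprime x b),
          ‖∑ v : (ZMod b)ˣ, stdAddChar (((x : ℕ) : ZMod b) * (v : ZMod b)) * H v‖ ^ 2
        ≤ ∑ x ∈ Finset.range b,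
          ‖∑ v : (ZMod b)ˣ, stdAddChar (((x : ℕ) : ZMod b) * (v : ZMod b)) * H v‖ ^ 2 :=
        Finset.sum_le_sum_of_subset_of_nonneg (Finset.filter_subset _ _)
          (fun i _ _ => by positivity)
    _ = ∑ z : ZMod b, ‖∑ v : (ZMod b)ˣ, stdAddChar (z * (v : ZMod b)) * H v‖ ^ 2 :=
        sum_range_eq b (fun z => ‖∑ v : (ZMod b)ˣ, stdAddChar (z * (v : ZMod b)) * H v‖ ^ 2)
    _ = (b : ℝ) * ∑ v : (ZMod b)ˣ, ‖H v‖ ^ 2 := parseval b H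
  -- Step 4 : H to T
  have hHG : ∀ v : (ZMod b)ˣ, H v = ∑ w : (ZMod s)ˣ, T v⁻¹ w := by
    intro v
    rw [hH, hT]
    simp only []
    have h3 : ∀ m : ℕ, a m * kloosterman 0 m s *
          stdAddChar (((m / r : ℕ) : ZMod b) * ((v⁻¹ : (ZMod b)ˣ) : ZMod b))
        = ∑ w : (ZMod s)ˣ, a m * (stdAddChar (((m : ℕ) : ZMod s) * (w : ZMod s))
            * stdAddChar (((m / r : ℕ) : ZMod b) * ((v⁻¹ : (ZMod b)ˣ) : ZMod b))) := by
      intro m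
      rw [kloosterman_zero_left]
      push_cast
      rw [Finset.mul_sum, Finset.sum_mul]
      exact Finset.sum_congr rfl fun w _ => by ring
    simp_rw [h3]
    rw [Finset.sum_comm]
  have hstep2 : ∑ v : (ZMod b)ˣ, ‖H v‖ ^ 2
      = ∑ v : (ZMod b)ˣ, ‖∑ w : (ZMod s)ˣ, T v w‖ ^ 2 :=
    Fintype.sum_equiv (Equiv.inv _) _ _ (fun v => by rw [hHG v]; rfl)
  -- Step 5 : Cauchy-Schwarz
  have hstep3 : ∑ v : (ZMod b)ˣ, ‖∑ w : (ZMod s)ˣ, T v w‖ ^ 2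
      ≤ (s : ℝ) * ∑ v : (ZMod b)ˣ, ∑ w : (ZMod s)ˣ, ‖T v w‖ ^ 2 := by
    rw [Finset.mul_sum]
    exact Finset.sum_le_sum (fun v _ => cs_step s (T v))
  -- Step 6 : identification with the RHS sum
  have hstep4 : ∑ v : (ZMod b)ˣ, ∑ w : (ZMod s)ˣ, ‖T v w‖ ^ 2
      = ∑ x ∈ (Finset.range (b * s)).filter (fun x => Nat.Coprime x (b * s)),
          ‖∑ m ∈ F, a m * eBase (((x * (m / r) : ℕ) : ℝ) / ((b * s : ℕ) : ℝ))‖ ^ 2 := by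
    have hrhs : ∑ x ∈ (Finset.range (b * s)).filter (fun x => Nat.Coprime x (b * s)),
          ‖∑ m ∈ F, a m * eBase (((x * (m / r) : ℕ) : ℝ) / ((b * s : ℕ) : ℝ))‖ ^ 2
        = ∑ z : (ZMod (b * s))ˣ,
            ‖∑ m ∈ F, a m * stdAddChar ((z : ZMod (b * s)) * ((m / r : ℕ) : ZMod (b * s)))‖ ^ 2 := by
      rw [← sum_units_eq_real (b * s)
        (fun z => ‖∑ m ∈ F, a m * stdAddChar (z * ((m / r : ℕ) : ZMod (b * s)))‖ ^ 2)]
      refine Finset.sum_congr rfl fun x hx => ?_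
      refine congrArg (fun z : ℂ => ‖z‖ ^ 2) (Finset.sum_congr rfl fun m _ => ?_)
      congr 1
      rw [eBase_nat (N := b * s)]
      congr 1
      push_cast
      ring
    rw [hrhs]
    rw [← Fintype.sum_bijective _ (TT_bijective b s r hbs hrs)
      (fun p : (ZMod b)ˣ × (ZMod s)ˣ => ‖T p.1 p.2‖ ^ 2)
      (fun z : (ZMod (b * s))ˣ =>
        ‖∑ m ∈ F, a m * stdAddChar ((z : ZMod (b * s)) * ((m / r : ℕ) : ZMod (b * s)))‖ ^ 2)
      ?_, Fintype.sum_prod_type]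
    rintro ⟨v, w⟩
    refine congrArg (fun z : ℂ => ‖z‖ ^ 2) ?_
    rw [hT]
    refine Finset.sum_congr rfl fun m hm => ?_
    rw [TT_psi b s r hbs hrs v w (m / r)]
    have hmr : r * (m / r) = m := Nat.mul_div_cancel' (by
      rw [hF] at hm
      exact (Finset.mem_filter.mp hm).2)
    rw [hmr]
    ring
  -- final assembly
  calc (r : ℝ) ^ 2 * ∑ x ∈ (Finset.range b).filter (fun x => Nat.Coprime x b),
        ‖∑ v : (ZMod b)ˣ, stdAddChar (((x : ℕ) : ZMod b) * (v : ZMod b)) * H v‖ ^ 2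
      ≤ (r : ℝ) ^ 2 * ((b : ℝ) * ∑ v : (ZMod b)ˣ, ‖H v‖ ^ 2) := by
        apply mul_le_mul_of_nonneg_left hstep1
        positivity
  _ = (r : ℝ) ^ 2 * ((b : ℝ) * ∑ v : (ZMod b)ˣ, ‖∑ w : (ZMod s)ˣ, T v w‖ ^ 2) := by
        rw [hstep2]
  _ ≤ (r : ℝ) ^ 2 * ((b : ℝ) * ((s : ℝ) * ∑ v : (ZMod b)ˣ, ∑ w : (ZMod s)ˣ, ‖T v w‖ ^ 2)) := by
        apply mul_le_mul_of_nonneg_left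
        · apply mul_le_mul_of_nonneg_left hstep3
          positivity
        · positivity
  _ = (b : ℝ) * r ^ 2 * s *
        ∑ x ∈ (Finset.range (b * s)).filter (fun x => Nat.Coprime x (b * s)),
          ‖∑ m ∈ F, a m * eBase (((x * (m / r) : ℕ) : ℝ) / ((b * s : ℕ) : ℝ))‖ ^ 2 := by
        rw [hstep4]
        ring
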